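/- arXiv:1111.1024 — 2 statements merged into one kernel-verified Lean document; each statement's English description precedes it below -/
import Mathlib

section
/- For every nonnegative integer n: ∑_{k=0}^n C(n,k)^{−2} · {1 − 2(n−2k)H_k} = 2·(1+n)^2/(2+n) · H_{n+1}, i.e. T_n^{(−2)} = 2(1+n)^2 H_{n+1}/(2+n). -/
noncomputable def H (m : ℕ) : ℚ := ∑ j ∈ Finset.range m, (1 : ℚ) / (j + 1)

noncomputable def psG (n k : ℕ) : ℚ :=
  (((n:ℚ)+2)*(2*(k:ℚ)+1) - (k:ℚ)^2) / ((((n:ℚ)+3)^2) * (((n+1).choose k : ℚ))^2)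
  - 2*(k:ℚ)*(2*(n:ℚ)+4-(k:ℚ)) * H k / (((n:ℚ)+3) * (((n+1).choose k : ℚ))^2)

lemma Hsucc (m : ℕ) : H (m+1) = H m + 1/((m:ℚ)+1) := by
  simp [H, Finset.sum_range_succ]

lemma zpow_neg_two (x : ℚ) : x^(-2:ℤ) = (x^2)⁻¹ := by
  rw [zpow_neg]; norm_cast

lemma psKey (n k : ℕ) (hk : k ≤ n) :
    (((n+1).choose k : ℚ))^(-2:ℤ) * (1 + (-2) * (((n:ℚ)+1) - 2*k) * H k)
      - (((n:ℚ)+2)^3/(((n:ℚ)+3)*((n:ℚ)+1)^2)) *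
        ((n.choose k : ℚ)^(-2:ℤ) * (1 + (-2) * ((n:ℚ) - 2*k) * H k))
    = psG n (k+1) - psG n k := by
  have hk1 : k ≤ n + 1 := le_trans hk (Nat.le_succ n)
  have hc0 : (n.choose k : ℚ) ≠ 0 := by
    exact_mod_cast (Nat.choose_pos hk).ne'
  have hc1 : (((n+1).choose k : ℚ)) ≠ 0 := by
    exact_mod_cast (Nat.choose_pos hk1).ne'
  have hc2 : (((n+1).choose (k+1) : ℚ)) ≠ 0 := by
    exact_mod_cast (Nat.choose_pos (Nat.succ_le_succ hk)).ne'
  have hKM : (k:ℚ) ≤ (n:ℚ) := by exact_mod_cast hk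
  have hd : ((n:ℚ)+1-(k:ℚ)) ≠ 0 := by intro h; nlinarith
  have hn1 : ((n:ℚ)+1) ≠ 0 := by positivity
  have hk1' : ((k:ℚ)+1) ≠ 0 := by positivity
  have hn3 : ((n:ℚ)+3) ≠ 0 := by positivity
  -- choose relations
  have relN : ((n+1).choose (k+1)) * (k+1) = ((n+1).choose k) * (n+1-k) :=
    Nat.choose_succ_right_eq (n+1) k
  have relN2 : (n+1) * (n.choose k) = ((n+1).choose (k+1)) * (k+1) :=
    Nat.add_one_mul_choose_eq n k
  have castsub : (((n+1-k : ℕ)):ℚ) = (n:ℚ)+1-(k:ℚ) := by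
    push_cast [Nat.cast_sub hk1]; ring
  have relB : ((k:ℚ)+1) * (((n+1).choose (k+1) : ℚ)) = ((n:ℚ)+1-(k:ℚ)) * (((n+1).choose k : ℚ)) := by
    have := congrArg (fun x : ℕ => (x : ℚ)) relN
    push_cast at this
    rw [castsub] at this
    linarith
  have relA : ((n:ℚ)+1) * ((n.choose k : ℚ)) = ((n:ℚ)+1-(k:ℚ)) * (((n+1).choose k : ℚ)) := by
    have := congrArg (fun x : ℕ => (x : ℚ)) (relN2.trans relN)
    push_cast at this
    rw [castsub] at this
    linarith
  have e1 : ((n.choose k : ℚ)) = ((n:ℚ)+1-(k:ℚ)) * (((n+1).choose k : ℚ)) / ((n:ℚ)+1) := by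
    field_simp
    linarith
  have e2 : (((n+1).choose (k+1) : ℚ)) = ((n:ℚ)+1-(k:ℚ)) * (((n+1).choose k : ℚ)) / ((k:ℚ)+1) := by
    field_simp
    linarith
  rw [zpow_neg_two, zpow_neg_two, psG, psG, Hsucc, e1, e2]
  push_cast
  field_simp
  ring

lemma psBoundary (n : ℕ) :
    (((n+1).choose (n+1) : ℚ))^(-2:ℤ) * (1 + (-2) * (((n:ℚ)+1) - 2*(n+1:ℕ)) * H (n+1))
      + (psG n (n+1) - psG n 0)
    = 2*((n:ℚ)+2)/((n:ℚ)+3) := by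
  have hn3 : ((n:ℚ)+3) ≠ 0 := by positivity
  rw [zpow_neg_two, psG, psG]
  simp only [Nat.choose_self, Nat.choose_zero_right, Nat.cast_one, Nat.cast_zero, H]
  push_cast
  field_simp
  ring

lemma psStep (n : ℕ) :
    ∑ k ∈ Finset.range (n+1+1),
      (((n+1).choose k : ℚ))^(-2:ℤ) * (1 + (-2) * (((n:ℚ)+1) - 2*k) * H k)
    = (((n:ℚ)+2)^3/(((n:ℚ)+3)*((n:ℚ)+1)^2)) *
        (∑ k ∈ Finset.range (n+1), ((n.choose k : ℚ))^(-2:ℤ) * (1 + (-2) * ((n:ℚ) - 2*k) * H k))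
      + 2*((n:ℚ)+2)/((n:ℚ)+3) := by
  set lam : ℚ := ((n:ℚ)+2)^3/(((n:ℚ)+3)*((n:ℚ)+1)^2) with hlam
  have tel : ∑ k ∈ Finset.range (n+1),
      ((((n+1).choose k : ℚ))^(-2:ℤ) * (1 + (-2) * (((n:ℚ)+1) - 2*k) * H k)
        - lam * ((n.choose k : ℚ)^(-2:ℤ) * (1 + (-2) * ((n:ℚ) - 2*k) * H k)))
      = psG n (n+1) - psG n 0 := by
    rw [← Finset.sum_range_sub (psG n) (n+1)]
    refine Finset.sum_congr rfl fun k hk => ?_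
    exact psKey n k (Nat.lt_succ_iff.mp (Finset.mem_range.mp hk))
  rw [Finset.sum_range_succ]
  have expand : ∑ k ∈ Finset.range (n+1),
      ((((n+1).choose k : ℚ))^(-2:ℤ) * (1 + (-2) * (((n:ℚ)+1) - 2*k) * H k)
        - lam * ((n.choose k : ℚ)^(-2:ℤ) * (1 + (-2) * ((n:ℚ) - 2*k) * H k)))
      = (∑ k ∈ Finset.range (n+1),
          (((n+1).choose k : ℚ))^(-2:ℤ) * (1 + (-2) * (((n:ℚ)+1) - 2*k) * H k))
        - lam * (∑ k ∈ Finset.range (n+1),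
          ((n.choose k : ℚ))^(-2:ℤ) * (1 + (-2) * ((n:ℚ) - 2*k) * H k)) := by
    rw [Finset.sum_sub_distrib, Finset.mul_sum]
  rw [expand] at tel
  have bd := psBoundary n
  push_cast at bd ⊢
  linarith

theorem paule_schneider_neg2 (n : ℕ) :
    ∑ k ∈ Finset.range (n + 1),
      ((n.choose k : ℚ))^(-2 : ℤ) * (1 + (-2) * ((n : ℚ) - 2*k) * H k) =
      2 * (1 + (n : ℚ))^2 / (2 + (n : ℚ)) * H (n + 1) := by
  induction n with
  | zero =>
    simp [H, Finset.sum_range_succ]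
  | succ n ih =>
    have hs := psStep n
    have hcast : ∑ k ∈ Finset.range (n + 1 + 1),
        (((n+1).choose k : ℚ))^(-2 : ℤ) * (1 + (-2) * (((n+1 : ℕ) : ℚ) - 2*k) * H k)
        = ∑ k ∈ Finset.range (n+1+1),
        (((n+1).choose k : ℚ))^(-2:ℤ) * (1 + (-2) * (((n:ℚ)+1) - 2*k) * H k) := by
      refine Finset.sum_congr rfl fun k _ => ?_
      push_cast
      ring_nf
    rw [hcast, hs, ih, Hsucc (n+1)]
    have h1 : ((n:ℚ)+1) ≠ 0 := by positivity
    have h2 : ((n:ℚ)+2) ≠ 0 := by positivity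
    have h3 : ((n:ℚ)+3) ≠ 0 := by positivity
    push_cast
    field_simp
    ring
end

section
/- For every nonnegative integer n: ∑_{k=0}^n C(n,k)^{−1} · {1 − (n−2k)H_k} = (1+n)·H_{n+1}, i.e. T_n^{(−1)} = (1+n)H_{n+1}. -/
lemma H_succ (m : ℕ) : H (m + 1) = H m + 1 / (m + 1) := by
  simp [H, Finset.sum_range_succ]

lemma choose_ne (n k : ℕ) (hk : k ≤ n) : ((n.choose k : ℚ)) ≠ 0 := by
  exact_mod_cast (Nat.choose_pos hk).ne'

lemma key (n k : ℕ) (hk : k ≤ n) :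
    ((n : ℚ) + 1) * ((((n+1).choose k : ℚ))⁻¹ * (1 - ((n : ℚ) + 1 - 2*k) * H k))
    = ((n : ℚ) + 2) * (((n.choose k : ℚ))⁻¹ * (1 - ((n : ℚ) - 2*k) * H k))
      + ((-(((n : ℚ) + 1) * ((k:ℚ)+1) * H (k+1)) * (((n+1).choose (k+1) : ℚ))⁻¹)
        - (-(((n : ℚ) + 1) * k * H k) * (((n+1).choose k : ℚ))⁻¹)) := by
  have ha := choose_ne n k hk
  have h1 : ((n+1).choose k : ℚ) * ((n : ℚ) + 1 - k) = (n.choose k : ℚ) * ((n : ℚ) + 1) := by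
    have h' : (n+1).choose k * (n + 1 - k) = n.choose k * (n + 1) :=
      (Nat.choose_mul_succ_eq n k).symm
    have hc := congrArg (Nat.cast : ℕ → ℚ) h'
    push_cast [Nat.cast_sub (show k ≤ n + 1 by omega)] at hc
    linarith
  have h2 : ((n+1).choose (k+1) : ℚ) * ((k : ℚ) + 1) = (n.choose k : ℚ) * ((n : ℚ) + 1) := by
    have hc := congrArg (Nat.cast : ℕ → ℚ) (Nat.add_one_mul_choose_eq n k)
    push_cast at hc
    linarith
  have hn1 : ((n : ℚ) + 1) ≠ 0 := by positivity
  have hk1 : ((k : ℚ) + 1) ≠ 0 := by positivity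
  have hb : (((n+1).choose k : ℚ))⁻¹ = ((n : ℚ) + 1 - k) * ((n.choose k : ℚ) * ((n : ℚ) + 1))⁻¹ := by
    have hbne : ((n+1).choose k : ℚ) ≠ 0 := choose_ne (n+1) k (by omega)
    field_simp
    linear_combination -h1
  have hd : (((n+1).choose (k+1) : ℚ))⁻¹ = ((k : ℚ) + 1) * ((n.choose k : ℚ) * ((n : ℚ) + 1))⁻¹ := by
    have hdne : ((n+1).choose (k+1) : ℚ) ≠ 0 := choose_ne (n+1) (k+1) (by omega)
    field_simp
    linear_combination -h2
  rw [hb, hd, H_succ]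
  field_simp
  ring

theorem paule_schneider_neg1 (n : ℕ) :
    ∑ k ∈ Finset.range (n + 1),
      ((n.choose k : ℚ))^(-1 : ℤ) * (1 + (-1) * ((n : ℚ) - 2*k) * H k) =
      (1 + (n : ℚ)) * H (n + 1) := by
  induction n with
  | zero => simp [H, Finset.sum_range_succ]
  | succ n ih =>
    have hn1 : ((n : ℚ) + 1) ≠ 0 := by positivity
    have zrw : ∀ m k : ℕ, ((m.choose k : ℚ))^(-1 : ℤ) * (1 + (-1) * ((m : ℚ) - 2*k) * H k)
        = ((m.choose k : ℚ))⁻¹ * (1 - ((m : ℚ) - 2*k) * H k) := by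
      intro m k
      rw [zpow_neg, zpow_one]
      ring
    simp only [zrw] at ih ⊢
    set G : ℕ → ℚ := fun k => -(((n : ℚ) + 1) * k * H k) * (((n+1).choose k : ℚ))⁻¹ with hG
    have main : (((n : ℚ) + 1)) * ∑ k ∈ Finset.range (n + 2),
        (((n+1).choose k : ℚ))⁻¹ * (1 - (((n:ℚ)+1) - 2*(k:ℚ)) * H k)
        = ((n : ℚ) + 2) * ((1 + (n : ℚ)) * H (n+1)) + (G (n+1) - G 0)
          + (((n : ℚ) + 1)) * (1 + ((n : ℚ) + 1) * H (n+1)) := by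
      rw [Finset.sum_range_succ, mul_add]
      have hlast : ((n:ℚ)+1) * ((((n+1).choose (n+1) : ℚ))⁻¹
            * (1 - (((n:ℚ)+1) - 2*((n+1 : ℕ):ℚ)) * H (n+1)))
          = ((n:ℚ)+1) * (1 + ((n : ℚ) + 1) * H (n+1)) := by
        rw [Nat.choose_self]
        push_cast
        ring
      rw [hlast, Finset.mul_sum]
      congr 1
      have hpt : ∀ k ∈ Finset.range (n+1),
          ((n : ℚ) + 1) * ((((n+1).choose k : ℚ))⁻¹ * (1 - (((n:ℚ)+1) - 2*(k:ℚ)) * H k))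
          = ((n : ℚ) + 2) * (((n.choose k : ℚ))⁻¹ * (1 - ((n : ℚ) - 2*(k:ℚ)) * H k))
            + (G (k+1) - G k) := by
        intro k hkmem
        have hk : k ≤ n := Nat.lt_succ_iff.mp (Finset.mem_range.mp hkmem)
        have hkey := key n k hk
        simp only [hG]
        push_cast
        push_cast at hkey
        linarith
      rw [Finset.sum_congr rfl hpt, Finset.sum_add_distrib, Finset.sum_range_sub G,
        ← Finset.mul_sum, ih]
    have hGn : G (n+1) = -(((n : ℚ) + 1) * ((n:ℚ)+1) * H (n+1)) := by
      simp only [hG, Nat.choose_self]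
      push_cast
      ring
    have hG0 : G 0 = 0 := by simp [hG, H]
    rw [hGn, hG0] at main
    have hH : H (n+2) = H (n+1) + 1/((n:ℚ)+2) := by
      rw [show n+2 = n+1+1 from rfl, H_succ]
      push_cast
      ring
    have goal2 : (((n : ℚ) + 1)) * ∑ k ∈ Finset.range (n + 2),
        (((n+1).choose k : ℚ))⁻¹ * (1 - (((n:ℚ)+1) - 2*(k:ℚ)) * H k)
        = (((n : ℚ) + 1)) * ((1 + ((n:ℚ)+1)) * H (n+2)) := by
      rw [main, hH]
      have hn2 : ((n : ℚ) + 2) ≠ 0 := by positivity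
      field_simp
      ring
    have hfin := mul_left_cancel₀ hn1 goal2
    push_cast
    rw [show n+1+1 = n+2 from rfl]
    convert hfin using 2
end
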